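/- In the 3-dimensional hypercube Q_3 there exists a triametral triple of vertices x, y, z (i.e. d(x,y) + d(x,z) + d(y,z) = tr(Q_3)) with d(x,y) = d(x,z) = d(y,z) = 2, so that no pair from this triple is diametral (since diam(Q_3) = 3); in particular, a triametral triple in a connected graph need not contain a diametral pair. -/

import Mathlib

/-- The triameter of a graph `G`: the maximum of `d(a,b) + d(a,c) + d(b,c)`
over all triples of vertices `a, b, c`. -/
noncomputable def SimpleGraph.triameter {V : Type*} [Fintype V] (G : SimpleGraph V) : ℕ :=
  Finset.univ.sup fun p : V × V × V =>
    G.dist p.1 p.2.1 + G.dist p.1 p.2.2 + G.dist p.2.1 p.2.2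

/-- The `n`-cube `Q_n`: vertices are `{0,1}^n`, two vertices are adjacent iff
they differ in exactly one coordinate. -/
def cubeGraph (n : ℕ) : SimpleGraph (Fin n → Bool) where
  Adj x y := ∃! i : Fin n, x i ≠ y i
  symm := by
    constructor
    rintro x y ⟨i, hi, hu⟩
    exact ⟨i, hi.symm, fun j hj => hu j hj.symm⟩
  loopless := by
    constructor
    rintro x ⟨i, hi, -⟩
    exact hi rfl

lemma cube_adj_iff {n : ℕ} (x y : Fin n → Bool) :
    (∃! i : Fin n, x i ≠ y i) ↔ hammingDist x y = 1 := by
  rw [hammingDist, Finset.card_eq_one]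
  constructor
  · rintro ⟨i, hi, hu⟩
    exact ⟨i, Finset.eq_singleton_iff_unique_mem.mpr
      ⟨by simpa using hi, fun j hj => hu j (by simpa using hj)⟩⟩
  · rintro ⟨i, hi⟩
    rw [Finset.eq_singleton_iff_unique_mem] at hi
    exact ⟨i, by simpa using hi.1, fun j hj => hi.2 j (by simpa using hj)⟩

lemma hamming_le_walk_length {n : ℕ} {x y : Fin n → Bool}
    (w : (cubeGraph n).Walk x y) : hammingDist x y ≤ w.length := by
  induction w with
  | nil => simp
  | cons h p ih =>
    have h1 : hammingDist _ _ = 1 := (cube_adj_iff _ _).mp h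
    calc hammingDist _ _ ≤ _ + _ := hammingDist_triangle _ _ _
    _ ≤ 1 + p.length := by rw [h1]; omega
    _ = _ := by simp [Nat.add_comm]

lemma cube_edist_le_hamming {n : ℕ} (x y : Fin n → Bool) :
    (cubeGraph n).edist x y ≤ hammingDist x y := by
  generalize hk : hammingDist x y = k
  induction k generalizing x with
  | zero =>
    have : x = y := by
      funext i
      by_contra hi
      have : i ∈ ({i | x i ≠ y i} : Finset (Fin n)) := by simpa using hi
      simp [hammingDist, Finset.card_eq_zero] at hk
      simp [hk] at this
    simp [this]
  | succ k ih =>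
    have hne : x ≠ y := by
      intro h; subst h; simp [hammingDist_self] at hk
    obtain ⟨i, hi⟩ : ∃ i, x i ≠ y i := by
      by_contra h
      push_neg at h
      exact hne (funext h)
    set x' := Function.update x i (y i) with hx'
    have hadj : (cubeGraph n).Adj x x' := by
      refine ⟨i, by simp [hx', Function.update_self, hi], fun j hj => ?_⟩
      by_contra hji
      exact hj (by simp [hx', Function.update_of_ne hji])
    have hd : hammingDist x' y = k := by
      have : ({j | x' j ≠ y j} : Finset (Fin n)) =
          ({j | x j ≠ y j} : Finset (Fin n)) \ {i} := by
        ext j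
        by_cases hji : j = i <;> simp [hx', hji, Function.update_of_ne, hi]
      rw [hammingDist, this, Finset.card_sdiff_of_subset (by simpa [hammingDist] using hi)]
      rw [hammingDist] at hk
      simp [hk]
    calc (cubeGraph n).edist x y ≤ (cubeGraph n).edist x x' + (cubeGraph n).edist x' y :=
        SimpleGraph.edist_triangle
    _ ≤ 1 + k := add_le_add (le_of_eq (SimpleGraph.edist_eq_one_iff_adj.mpr hadj)) (ih x' hd)
    _ = ((k + 1 : ℕ) : ℕ∞) := by push_cast; ring

lemma cube_edist {n : ℕ} (x y : Fin n → Bool) :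
    (cubeGraph n).edist x y = hammingDist x y := by
  refine le_antisymm (cube_edist_le_hamming x y) ?_
  have hne : (cubeGraph n).edist x y ≠ ⊤ :=
    lt_of_le_of_lt (cube_edist_le_hamming x y) (by simp) |>.ne
  obtain ⟨p, hp⟩ := SimpleGraph.exists_walk_of_edist_ne_top hne
  rw [← hp]
  exact_mod_cast hamming_le_walk_length p

lemma cube_dist {n : ℕ} (x y : Fin n → Bool) :
    (cubeGraph n).dist x y = hammingDist x y := by
  rw [SimpleGraph.dist, cube_edist]; simp


lemma hamming_le {n : ℕ} (x y : Fin n → Bool) : hammingDist x y ≤ n := by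
  simpa [hammingDist] using Finset.card_filter_le Finset.univ (fun i => x i ≠ y i)

lemma hamming_sum_le {n : ℕ} (x y z : Fin n → Bool) :
    hammingDist x y + hammingDist x z + hammingDist y z ≤ 2 * n := by
  simp only [hammingDist, Finset.card_filter]
  rw [← Finset.sum_add_distrib, ← Finset.sum_add_distrib]
  calc _ ≤ ∑ _i : Fin n, 2 := by
        refine Finset.sum_le_sum fun i _ => ?_
        cases hx : x i <;> cases hy : y i <;> cases hz : z i <;> simp
  _ = 2 * n := by simp [Nat.mul_comm]

/-- In `Q_3` there is a triametral triple whose three pairwise distances all equal `2`;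
since `diam(Q_3) = 3`, no pair of this triple is diametral. -/
theorem cube_three_triametral_triple_no_diametral_pair :
    ∃ x y z : Fin 3 → Bool,
      (cubeGraph 3).dist x y + (cubeGraph 3).dist x z + (cubeGraph 3).dist y z =
        (cubeGraph 3).triameter ∧
      (cubeGraph 3).dist x y = 2 ∧ (cubeGraph 3).dist x z = 2 ∧ (cubeGraph 3).dist y z = 2 ∧
      (cubeGraph 3).diam = 3 := by
  refine ⟨![false, true, true], ![true, false, true], ![true, true, false], ?_, ?_, ?_, ?_, ?_⟩
  · unfold SimpleGraph.triameter
    refine le_antisymm ?_ ?_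
    · exact Finset.le_sup (f := fun p : (Fin 3 → Bool) × (Fin 3 → Bool) × (Fin 3 → Bool) =>
        (cubeGraph 3).dist p.1 p.2.1 + (cubeGraph 3).dist p.1 p.2.2 +
          (cubeGraph 3).dist p.2.1 p.2.2)
        (Finset.mem_univ (![false, true, true], ![true, false, true], ![true, true, false]))
    refine Finset.sup_le fun p _ => ?_
    calc _ ≤ (6:ℕ) := by simpa only [cube_dist] using hamming_sum_le p.1 p.2.1 p.2.2
    _ = _ := by simp only [cube_dist]; decide
  · rw [cube_dist]; decide
  · rw [cube_dist]; decide
  · rw [cube_dist]; decide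
  · have hed : (cubeGraph 3).ediam = 3 := by
      refine le_antisymm (SimpleGraph.ediam_le_of_edist_le fun u v => ?_) ?_
      · rw [cube_edist]
        exact_mod_cast Nat.cast_le.mpr (hamming_le u v)
      · calc (3 : ℕ∞) = (cubeGraph 3).edist (fun _ => false) (fun _ => true) := by
              rw [cube_edist]; decide
        _ ≤ _ := SimpleGraph.edist_le_ediam
    rw [SimpleGraph.diam, hed]; rfl
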